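/- Let d ≥ 1 and let δ be a real number with 0 < δ < 1/2. Let p, q, u, v be four points of the Euclidean space ℝ^d satisfying: (i) 1 − δ ≤ dist(p,q) ≤ 1 + δ and 1 − δ ≤ dist(u,v) ≤ 1 + δ; (ii) dist(p,u) ≥ 3√δ, dist(p,v) ≥ 3√δ, dist(q,u) ≥ 3√δ and dist(q,v) ≥ 3√δ; (iii) writing θ for the angle between the vectors v − u and q − p (so θ ∈ [0,π]), one has min(θ, π − θ) ≤ √δ/3 (the angle between the line supporting uv and the line supporting pq is at most √δ/3). Then max{dist(q,u), dist(p,v), dist(p,u), dist(q,v)} > 1 + δ. -/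

import Mathlib

open Real

lemma key_false {E : Type*} [NormedAddCommGroup E] [InnerProductSpace ℝ E]
    (δ : ℝ) (hδ0 : 0 < δ) (hδ1 : δ < 1 / 2) (a b x : E)
    (hab : (1 - δ) ^ 2 * (1 - δ / 18) ≤ (inner ℝ a b : ℝ))
    (h1 : 3 * Real.sqrt δ ≤ ‖x‖) (h2 : 3 * Real.sqrt δ ≤ ‖x + b - a‖)
    (h3 : ‖x - a‖ ≤ 1 + δ) (h4 : ‖x + b‖ ≤ 1 + δ) : False := by
  have hid : ‖x + b‖ ^ 2 + ‖x - a‖ ^ 2 - ‖x + b - a‖ ^ 2 - ‖x‖ ^ 2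
      = 2 * (inner ℝ a b : ℝ) := by
    have e1 := @norm_add_sq_real E _ _ x b
    have e2 := @norm_sub_sq_real E _ _ x a
    have e3 := @norm_sub_sq_real E _ _ (x + b) a
    have e4 : (inner ℝ (x + b) a : ℝ) = inner ℝ x a + inner ℝ b a := inner_add_left x b a
    have e5 : (inner ℝ a b : ℝ) = inner ℝ b a := real_inner_comm b a
    linarith [e1, e2, e3, e4, e5]
  have hsq : Real.sqrt δ ^ 2 = δ := Real.sq_sqrt hδ0.le
  have hs0 : 0 ≤ 3 * Real.sqrt δ := by positivity
  have h1' : 9 * δ ≤ ‖x‖ ^ 2 := by nlinarith [pow_le_pow_left₀ hs0 h1 2]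
  have h2' : 9 * δ ≤ ‖x + b - a‖ ^ 2 := by nlinarith [pow_le_pow_left₀ hs0 h2 2]
  have h3' : ‖x - a‖ ^ 2 ≤ (1 + δ) ^ 2 := by nlinarith [norm_nonneg (x - a)]
  have h4' : ‖x + b‖ ^ 2 ≤ (1 + δ) ^ 2 := by nlinarith [norm_nonneg (x + b)]
  have hA : 2 * (inner ℝ a b : ℝ) ≤ 2 * (1 + δ) ^ 2 - 18 * δ := by linarith
  nlinarith [hab, hA, hδ0, hδ1, mul_pos hδ0 hδ0, mul_pos (mul_pos hδ0 hδ0) hδ0]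

set_option maxHeartbeats 1000000 in
theorem almost_diametrical_pairs_far_apart_or_long
    (d : ℕ) (hd : 1 ≤ d) (δ : ℝ) (hδ0 : 0 < δ) (hδ1 : δ < 1 / 2)
    (p q u v : EuclideanSpace ℝ (Fin d))
    (hpq_lo : 1 - δ ≤ dist p q) (hpq_hi : dist p q ≤ 1 + δ)
    (huv_lo : 1 - δ ≤ dist u v) (huv_hi : dist u v ≤ 1 + δ)
    (hpu : 3 * Real.sqrt δ ≤ dist p u)
    (hpv : 3 * Real.sqrt δ ≤ dist p v)
    (hqu : 3 * Real.sqrt δ ≤ dist q u)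
    (hqv : 3 * Real.sqrt δ ≤ dist q v)
    (hangle :
      min (InnerProductGeometry.angle (v - u) (q - p))
          (π - InnerProductGeometry.angle (v - u) (q - p)) ≤ Real.sqrt δ / 3) :
    1 + δ < max (max (dist q u) (dist p v)) (max (dist p u) (dist q v)) := by
  by_contra hcon
  push_neg at hcon
  have hQU : dist q u ≤ 1 + δ := le_trans (le_trans (le_max_left _ _) (le_max_left _ _)) hcon
  have hPV : dist p v ≤ 1 + δ := le_trans (le_trans (le_max_right _ _) (le_max_left _ _)) hcon
  have hPU : dist p u ≤ 1 + δ := le_trans (le_trans (le_max_left _ _) (le_max_right _ _)) hcon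
  have hQV : dist q v ≤ 1 + δ := le_trans (le_trans (le_max_right _ _) (le_max_right _ _)) hcon
  set a : EuclideanSpace ℝ (Fin d) := q - p with ha
  set b : EuclideanSpace ℝ (Fin d) := v - u with hb
  have hna : ‖a‖ = dist p q := by rw [dist_eq_norm, ha, norm_sub_rev]
  have hnb : ‖b‖ = dist u v := by rw [dist_eq_norm, hb, norm_sub_rev]
  have hδs : 0 ≤ Real.sqrt δ := Real.sqrt_nonneg δ
  have hsq : Real.sqrt δ ^ 2 = δ := Real.sq_sqrt hδ0.le
  set θ : ℝ := InnerProductGeometry.angle b a with hθ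
  have hθ0 : 0 ≤ θ := InnerProductGeometry.angle_nonneg b a
  have hθπ : θ ≤ π := InnerProductGeometry.angle_le_pi b a
  -- inner b a = cos θ * ‖b‖‖a‖
  have hinner : Real.cos θ * (‖b‖ * ‖a‖) = (inner ℝ b a : ℝ) :=
    InnerProductGeometry.cos_angle_mul_norm_mul_norm b a
  have hbound : ∀ ψ : ℝ, 0 ≤ ψ → ψ ≤ Real.sqrt δ / 3 → 1 - δ / 18 ≤ Real.cos ψ := by
    intro ψ hψ0 hψ1
    have := Real.one_sub_sq_div_two_le_cos (x := ψ)
    nlinarith [pow_le_pow_left₀ hψ0 hψ1 2]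
  have hnorms : (0:ℝ) < 1 - δ := by linarith
  rcases min_le_iff.mp hangle with hcase | hcase
  · -- θ ≤ √δ/3
    have hcos : 1 - δ / 18 ≤ Real.cos θ := hbound θ hθ0 hcase
    have hab : (1 - δ) ^ 2 * (1 - δ / 18) ≤ (inner ℝ a b : ℝ) := by
      rw [← real_inner_comm a b, ← hinner]
      have h1 : 1 - δ ≤ ‖a‖ := hna ▸ hpq_lo
      have h2 : 1 - δ ≤ ‖b‖ := hnb ▸ huv_lo
      have hba : (1 - δ) ^ 2 ≤ ‖b‖ * ‖a‖ := by nlinarith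
      have hcpos : (0:ℝ) ≤ 1 - δ / 18 := by linarith
      have k1 := mul_le_mul_of_nonneg_right hba hcpos
      have k2 := mul_le_mul_of_nonneg_left hcos
        (mul_nonneg (norm_nonneg b) (norm_nonneg a))
      linarith [mul_comm (Real.cos θ) (‖b‖ * ‖a‖)]
    refine key_false δ hδ0 hδ1 a b (u - p) hab ?_ ?_ ?_ ?_
    · rwa [show ‖u - p‖ = dist p u by rw [dist_eq_norm, norm_sub_rev]]
    · have : u - p + b - a = v - q := by rw [hb, ha]; abel
      rw [this, show ‖v - q‖ = dist q v by rw [dist_eq_norm, norm_sub_rev]]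
      exact hqv
    · have : u - p - a = u - q := by rw [ha]; abel
      rw [this, show ‖u - q‖ = dist q u by rw [dist_eq_norm, norm_sub_rev]]
      exact hQU
    · have : u - p + b = v - p := by rw [hb]; abel
      rw [this, show ‖v - p‖ = dist p v by rw [dist_eq_norm, norm_sub_rev]]
      exact hPV
  · -- π - θ ≤ √δ/3, use -b
    have hθ' : InnerProductGeometry.angle (-b) a = π - θ := by
      rw [InnerProductGeometry.angle_neg_left, hθ]
    have hcos : 1 - δ / 18 ≤ Real.cos (π - θ) :=
      hbound (π - θ) (by linarith) hcase
    have hinner' : Real.cos (π - θ) * (‖(-b)‖ * ‖a‖) = (inner ℝ (-b) a : ℝ) := by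
      rw [← hθ']; exact InnerProductGeometry.cos_angle_mul_norm_mul_norm (-b) a
    have hab : (1 - δ) ^ 2 * (1 - δ / 18) ≤ (inner ℝ a (-b) : ℝ) := by
      rw [← real_inner_comm a (-b), ← hinner', norm_neg]
      have h1 : 1 - δ ≤ ‖a‖ := hna ▸ hpq_lo
      have h2 : 1 - δ ≤ ‖b‖ := hnb ▸ huv_lo
      have hba : (1 - δ) ^ 2 ≤ ‖b‖ * ‖a‖ := by nlinarith
      have hcpos : (0:ℝ) ≤ 1 - δ / 18 := by linarith
      have k1 := mul_le_mul_of_nonneg_right hba hcpos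
      have k2 := mul_le_mul_of_nonneg_left hcos
        (mul_nonneg (norm_nonneg b) (norm_nonneg a))
      linarith [mul_comm (Real.cos (π - θ)) (‖b‖ * ‖a‖)]
    refine key_false δ hδ0 hδ1 a (-b) (v - p) hab ?_ ?_ ?_ ?_
    · rwa [show ‖v - p‖ = dist p v by rw [dist_eq_norm, norm_sub_rev]]
    · have : v - p + -b - a = u - q := by rw [hb, ha]; abel
      rw [this, show ‖u - q‖ = dist q u by rw [dist_eq_norm, norm_sub_rev]]
      exact hqu
    · have : v - p - a = v - q := by rw [ha]; abel
      rw [this, show ‖v - q‖ = dist q v by rw [dist_eq_norm, norm_sub_rev]]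
      exact hQV
    · have : v - p + -b = u - p := by rw [hb]; abel
      rw [this, show ‖u - p‖ = dist p u by rw [dist_eq_norm, norm_sub_rev]]
      exact hPU
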